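/- Let V = e^{-i(π/4) H_x} e^{-i(π/4) H} where H = Σ_{j=1}^n Z_j Z_{j+1} (periodic, n ≥ 5) and H_x = Σ_j X_j. Then for 0 ≤ l ≤ n−4, conjugation of the Pauli string Z_k X_{k+1}⋯X_{k+l} Z_{k+l+1} by V grows the string: V† (Z_k X_{k+1}⋯X_{k+l} Z_{k+l+1}) V = Z_{k−1} X_k X_{k+1}⋯X_{k+l+1} Z_{k+l+2} (indices mod n). -/

import Mathlib

open Matrix Complex

noncomputable section

/-- States of an `n`-qubit system, as amplitudes over computational basis strings. -/
abbrev QState (n : ℕ) := (Fin n → Fin 2) → ℂ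

/-- Operators on an `n`-qubit system. -/
abbrev QOp (n : ℕ) := Matrix (Fin n → Fin 2) (Fin n → Fin 2) ℂ

def PX : Matrix (Fin 2) (Fin 2) ℂ := !![0, 1; 1, 0]
def PY : Matrix (Fin 2) (Fin 2) ℂ := !![0, -Complex.I; Complex.I, 0]
def PZ : Matrix (Fin 2) (Fin 2) ℂ := !![1, 0; 0, -1]

/-- Tensor product of single-qubit operators. -/
def kron {n : ℕ} (f : Fin n → Matrix (Fin 2) (Fin 2) ℂ) : QOp n :=
  fun i k => ∏ l, f l (i l) (k l)

/-- Single-qubit operator `A` acting on qubit `j` of an `n`-qubit system. -/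
def op1 {n : ℕ} (A : Matrix (Fin 2) (Fin 2) ℂ) (j : Fin n) : QOp n :=
  kron (fun l => if l = j then A else 1)

def Zop {n : ℕ} (j : Fin n) : QOp n := op1 PZ j
def Xop {n : ℕ} (j : Fin n) : QOp n := op1 PX j
def Yop {n : ℕ} (j : Fin n) : QOp n := op1 PY j

/-- The ring-of-disagrees (MAX-CUT on the `n`-cycle) Hamiltonian. -/
def ringH (n : ℕ) [NeZero n] : QOp n := ∑ j : Fin n, Zop j * Zop (j + 1)

/-- The standard one-body mixer Hamiltonian. -/
def mixerH (n : ℕ) : QOp n := ∑ j : Fin n, Xop j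

/-- The state `|+⟩^{⊗ n}`. -/
def plusState (n : ℕ) : QState n := fun _ => ((1 / Real.sqrt 2) ^ n : ℝ)

/-- The expectation value `⟨ψ|A|ψ⟩`. -/
def expect {n : ℕ} (A : QOp n) (ψ : QState n) : ℂ :=
  ∑ i, ∑ k, (starRingEnd ℂ) (ψ i) * A i k * ψ k

/-- A single QAOA layer `e^{-iβ H_x} e^{-iγ H}`. -/
def qaoaLayer {n : ℕ} (H : QOp n) (γ β : ℝ) : QOp n :=
  NormedSpace.exp ((-(β : ℂ) * Complex.I) • mixerH n) *
    NormedSpace.exp ((-(γ : ℂ) * Complex.I) • H)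

/-- The depth-`p` QAOA ansatz state, layer `k = 0` acting first. -/
def qaoaState {n : ℕ} (H : QOp n) (p : ℕ) (γ β : Fin p → ℝ) : QState n :=
  ((List.ofFn (fun k : Fin p => qaoaLayer H (γ k) (β k))).reverse.prod).mulVec (plusState n)

/-- The QAOA layer `V` with both angles `π/4`. -/
def Vop (n : ℕ) [NeZero n] : QOp n := qaoaLayer (ringH n) (Real.pi / 4) (Real.pi / 4)

open Fin.NatCast in
/-- The Pauli string `Z_k X_{k+1} ⋯ X_{k+l} Z_{k+l+1}` (indices mod `n`). -/
def ZXXZ (n : ℕ) [NeZero n] (k : Fin n) (l : ℕ) : QOp n :=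
  Zop k * (List.ofFn (fun t : Fin l => Xop (k + (((t : ℕ) + 1 : ℕ) : Fin n)))).prod *
    Zop (k + ((l + 1 : ℕ) : Fin n))

open Fin.NatCast in
/-- The Pauli string `Y_k X_{k+1} ⋯ X_{k+l} Y_{k+l+1}` (indices mod `n`). -/
def YXXY (n : ℕ) [NeZero n] (k : Fin n) (l : ℕ) : QOp n :=
  Yop k * (List.ofFn (fun t : Fin l => Xop (k + (((t : ℕ) + 1 : ℕ) : Fin n)))).prod *
    Yop (k + ((l + 1 : ℕ) : Fin n))

open Fin.NatCast Fin.CommRing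

namespace Stmt6Aux

abbrev M2 := Matrix (Fin 2) (Fin 2) ℂ

variable {n : ℕ}

lemma kron_mul (f g : Fin n → M2) : kron f * kron g = kron (fun l => f l * g l) := by
  ext i k
  simp only [kron, Matrix.mul_apply]
  rw [← Fintype.piFinset_univ, Finset.prod_univ_sum (t := fun _ : Fin n => (Finset.univ : Finset (Fin 2))) (f := fun l j => f l (i l) j * g l j (k l))]
  exact Finset.sum_congr rfl fun m _ => (Finset.prod_mul_distrib).symm

lemma kron_one : kron (fun _ : Fin n => (1 : M2)) = 1 := by
  ext i k
  simp only [kron, Matrix.one_apply]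
  by_cases h : i = k
  · subst h; simp
  · rw [if_neg h]
    obtain ⟨l, hl⟩ := Function.ne_iff.mp h
    exact Finset.prod_eq_zero (Finset.mem_univ l) (by simp [Matrix.one_apply, hl])

lemma kron_congr {f g : Fin n → M2} (h : ∀ l, f l = g l) : kron f = kron g := by
  have : f = g := funext h
  rw [this]

lemma kron_smul_site (f : Fin n → M2) (j : Fin n) (c : ℂ) (A : M2) (hj : f j = c • A) :
    kron f = c • kron (Function.update f j A) := by
  ext i k
  simp only [kron, Matrix.smul_apply, smul_eq_mul]
  rw [← Finset.prod_erase_mul _ _ (Finset.mem_univ j),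
      ← Finset.prod_erase_mul _ _ (Finset.mem_univ j)]
  rw [Function.update_self, hj]
  have : ∀ l ∈ Finset.univ.erase j, (Function.update f j A l) (i l) (k l) = f l (i l) (k l) := by
    intro l hl
    rw [Function.update_of_ne (Finset.mem_erase.mp hl).1]
  rw [Finset.prod_congr rfl this]
  simp [Matrix.smul_apply]
  ring

end Stmt6Aux
namespace Stmt6Aux

variable {n : ℕ}

lemma op1_eq_kron (A : M2) (j : Fin n) :
    op1 A j = kron (fun l => if l = j then A else 1) := rfl

lemma op1_mul_kron (A : M2) (j : Fin n) (g : Fin n → M2) :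
    op1 A j * kron g = kron (fun l => if l = j then A * g l else g l) := by
  rw [op1_eq_kron, kron_mul]
  exact kron_congr fun l => by split_ifs <;> simp

lemma kron_mul_op1 (A : M2) (j : Fin n) (g : Fin n → M2) :
    kron g * op1 A j = kron (fun l => if l = j then g l * A else g l) := by
  rw [op1_eq_kron, kron_mul]
  exact kron_congr fun l => by split_ifs <;> simp

lemma op1_commute_kron (A : M2) (j : Fin n) (g : Fin n → M2) (h : A * g j = g j * A) :
    op1 A j * kron g = kron g * op1 A j := by
  rw [op1_mul_kron, kron_mul_op1]
  exact kron_congr fun l => by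
    split_ifs with hl
    · subst hl; exact h
    · rfl

lemma op1_mul_same (A B : M2) (j : Fin n) : op1 A j * op1 B j = op1 (A * B) j := by
  rw [op1_eq_kron B, op1_mul_kron]
  exact kron_congr fun l => by split_ifs <;> simp

lemma op1_one (j : Fin n) : op1 (1 : M2) j = 1 := by
  rw [op1_eq_kron]
  rw [show (fun l => if l = j then (1:M2) else 1) = fun _ : Fin n => (1:M2) from funext fun l => by split_ifs <;> rfl]
  exact kron_one

lemma op1_smul (c : ℂ) (A : M2) (j : Fin n) : op1 (c • A) j = c • op1 A j := by
  rw [op1_eq_kron, kron_smul_site _ j c A (by simp)]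
  congr 1
  rw [op1_eq_kron]
  exact kron_congr fun l => by
    by_cases hl : l = j
    · subst hl; simp
    · simp [Function.update_of_ne hl, hl]

lemma op1_commute_ne (A B : M2) {j j' : Fin n} (h : j ≠ j') :
    op1 A j * op1 B j' = op1 B j' * op1 A j := by
  rw [op1_eq_kron B j', op1_commute_kron]
  rw [if_neg h]
  simp

-- 2x2 Pauli facts
lemma PX_mul_PX : PX * PX = 1 := by
  simp [PX]; ext i j; fin_cases i <;> fin_cases j <;> simp [Matrix.mul_apply, Fin.sum_univ_two, Matrix.one_apply]

lemma PZ_mul_PZ : PZ * PZ = 1 := by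
  ext i j; fin_cases i <;> fin_cases j <;> simp [PZ, Matrix.mul_apply, Fin.sum_univ_two, Matrix.one_apply]

lemma PY_mul_PY : PY * PY = 1 := by
  ext i j; fin_cases i <;> fin_cases j <;>
    simp [PY, Matrix.mul_apply, Fin.sum_univ_two, Matrix.one_apply, Complex.I_mul_I]

lemma PX_mul_PZ : PX * PZ = (-Complex.I) • PY := by
  ext i j; fin_cases i <;> fin_cases j <;>
    simp [PX, PZ, PY, Matrix.mul_apply, Fin.sum_univ_two, Complex.I_mul_I]

lemma PZ_mul_PX : PZ * PX = Complex.I • PY := by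
  ext i j; fin_cases i <;> fin_cases j <;>
    simp [PX, PZ, PY, Matrix.mul_apply, Fin.sum_univ_two, Complex.I_mul_I]

lemma PZ_mul_PY : PZ * PY = (-Complex.I) • PX := by
  ext i j; fin_cases i <;> fin_cases j <;>
    simp [PX, PZ, PY, Matrix.mul_apply, Fin.sum_univ_two, Complex.I_mul_I]

lemma PY_mul_PZ : PY * PZ = Complex.I • PX := by
  ext i j; fin_cases i <;> fin_cases j <;>
    simp [PX, PZ, PY, Matrix.mul_apply, Fin.sum_univ_two, Complex.I_mul_I]

lemma PXH : PXᴴ = PX := by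
  ext i j; fin_cases i <;> fin_cases j <;> simp [PX, Matrix.conjTranspose_apply]

lemma PZH : PZᴴ = PZ := by
  ext i j; fin_cases i <;> fin_cases j <;> simp [PZ, Matrix.conjTranspose_apply]

end Stmt6Aux
namespace Stmt6Aux

variable {n : ℕ}

set_option maxHeartbeats 1000000 in
lemma exp_smul_of_sq_one (A : QOp n) (hA : A * A = 1) (z : ℂ) :
    NormedSpace.exp (z • A) = Complex.cosh z • 1 + Complex.sinh z • A := by
  letI : SeminormedRing (QOp n) := Matrix.linftyOpSemiNormedRing
  letI : NormedRing (QOp n) := Matrix.linftyOpNormedRing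
  letI : NormedAlgebra ℂ (QOp n) := Matrix.linftyOpNormedAlgebra
  have hsq : A ^ 2 = 1 := by rw [sq, hA]
  have hpow : ∀ m : ℕ, A ^ (2 * m) = 1 := fun m => by rw [pow_mul, hsq, one_pow]
  have e1 : ∀ m : ℕ, (z ^ (2*m) / ((Nat.factorial (2*m) : ℕ) : ℂ)) • (1 : QOp n)
      = ((Nat.factorial (2*m) : ℕ) : ℂ)⁻¹ • (z • A) ^ (2*m) := fun m => by
    rw [smul_pow, hpow, smul_smul, div_eq_mul_inv, mul_comm]
  have e2 : ∀ m : ℕ, (z ^ (2*m+1) / ((Nat.factorial (2*m+1) : ℕ) : ℂ)) • A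
      = ((Nat.factorial (2*m+1) : ℕ) : ℂ)⁻¹ • (z • A) ^ (2*m+1) := fun m => by
    rw [smul_pow, pow_succ A, hpow, one_mul, smul_smul, div_eq_mul_inv, mul_comm]
  have h1 : HasSum (fun m : ℕ => ((Nat.factorial (2*m) : ℕ) : ℂ)⁻¹ • (z • A) ^ (2*m)) (Complex.cosh z • (1 : QOp n)) := by
    have h := (Complex.hasSum_cosh z).smul_const (1 : QOp n)
    simp only [e1] at h
    exact h
  have h2 : HasSum (fun m : ℕ => ((Nat.factorial (2*m+1) : ℕ) : ℂ)⁻¹ • (z • A) ^ (2*m+1)) (Complex.sinh z • A) := by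
    have h := (Complex.hasSum_sinh z).smul_const A
    simp only [e2] at h
    exact h
  have h3 : HasSum (fun m : ℕ => ((Nat.factorial m : ℕ) : ℂ)⁻¹ • (z • A) ^ m)
      (Complex.cosh z • (1 : QOp n) + Complex.sinh z • A) := h1.even_add_odd h2
  rw [NormedSpace.exp_eq_tsum (𝕂 := ℂ)]
  exact h3.tsum_eq

lemma exp_conj_of_commute (M S : QOp n) (h : Commute M S) :
    NormedSpace.exp (-M) * S * NormedSpace.exp M = S := by
  have h2 : Commute (NormedSpace.exp (-M)) S := (h.neg_left).exp_left
  have h3 : NormedSpace.exp ((-M) + M) = NormedSpace.exp (-M) * NormedSpace.exp M :=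
    Matrix.exp_add_of_commute (-M) M ((Commute.refl M).neg_left)
  rw [h2.eq, mul_assoc, ← h3, neg_add_cancel, NormedSpace.exp_zero, mul_one]

/-- The coefficient appearing in the QAOA layer at angle `π/4`. -/
def cc : ℂ := -((Real.pi / 4 : ℝ) : ℂ) * Complex.I

lemma cosh_cc : Complex.cosh cc = ((Real.sqrt 2 : ℝ) : ℂ) / 2 := by
  rw [cc, neg_mul, Complex.cosh_neg, Complex.cosh_mul_I, ← Complex.ofReal_cos,
    Real.cos_pi_div_four]
  push_cast
  ring

lemma sinh_cc : Complex.sinh cc = -(((Real.sqrt 2 : ℝ) : ℂ) / 2) * Complex.I := by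
  rw [cc, neg_mul, Complex.sinh_neg, Complex.sinh_mul_I, ← Complex.ofReal_sin,
    Real.sin_pi_div_four]
  push_cast
  ring

lemma sqrt2_sq : (((Real.sqrt 2 : ℝ) : ℂ)) ^ 2 = 2 := by
  rw [← Complex.ofReal_pow, Real.sq_sqrt (by norm_num : (0:ℝ) ≤ 2)]
  norm_num

lemma cosh_cc_sq_sub : Complex.cosh cc ^ 2 - Complex.sinh cc ^ 2 = 1 :=
  Complex.cosh_sq_sub_sinh_sq cc

lemma cosh_cc_sq_add : Complex.cosh cc ^ 2 + Complex.sinh cc ^ 2 = 0 := by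
  rw [cosh_cc, sinh_cc]
  linear_combination (1/4 + Complex.I^2/4) * sqrt2_sq + (1/2 : ℂ) * Complex.I_sq

lemma two_cosh_sinh_cc : 2 * (Complex.cosh cc * Complex.sinh cc) = -Complex.I := by
  rw [cosh_cc, sinh_cc]
  linear_combination (-Complex.I/2) * sqrt2_sq

end Stmt6Aux
namespace Stmt6Aux

variable {n : ℕ}

lemma exp_conj_anticomm (A S : QOp n) (hA : A * A = 1) (h : A * S = -(S * A)) :
    NormedSpace.exp (-(cc • A)) * S * NormedSpace.exp (cc • A) = Complex.I • (A * S) := by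
  have hSA : S * A = -(A * S) := by rw [h, neg_neg]
  have hASA : A * S * A = -S := by
    rw [mul_assoc, hSA, mul_neg, ← mul_assoc, hA, one_mul]
  rw [show -(cc • A) = (-cc) • A from (neg_smul cc A).symm,
    exp_smul_of_sq_one A hA, exp_smul_of_sq_one A hA, Complex.cosh_neg, Complex.sinh_neg]
  simp only [add_mul, mul_add, smul_mul_assoc, mul_smul_comm, one_mul, mul_one, smul_smul]
  rw [hASA, hSA]
  simp only [smul_neg, neg_smul]
  match_scalars
  · linear_combination cosh_cc_sq_add
  · linear_combination (-1 : ℂ) * two_cosh_sinh_cc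

lemma exp_split3 (P Q R : QOp n) (hPQ : Commute P Q) (hPR : Commute P R) (hQR : Commute Q R) :
    NormedSpace.exp (cc • (P + Q + R))
      = NormedSpace.exp (cc • P) * NormedSpace.exp (cc • Q) * NormedSpace.exp (cc • R) := by
  have e1 : cc • (P + Q + R) = (cc • P + cc • Q) + cc • R := by
    simp [smul_add, add_assoc]
  rw [e1, Matrix.exp_add_of_commute (cc • P + cc • Q) (cc • R)
      (((hPR.smul_left cc).smul_right cc).add_left ((hQR.smul_left cc).smul_right cc)),
    Matrix.exp_add_of_commute (cc • P) (cc • Q) ((hPQ.smul_left cc).smul_right cc)]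

lemma conj_layer (P Q R S : QOp n)
    (hPQ : Commute P Q) (hPR : Commute P R) (hQR : Commute Q R)
    (hP : P * P = 1) (hQ : Q * Q = 1)
    (h1 : P * S = -(S * P))
    (h2 : Q * (P * S) = -((P * S) * Q))
    (h3 : Commute R (Q * (P * S))) :
    NormedSpace.exp (-(cc • (P + Q + R))) * S * NormedSpace.exp (cc • (P + Q + R))
      = -(Q * (P * S)) := by
  have hsplitp := exp_split3 P Q R hPQ hPR hQR
  have hsplitm : NormedSpace.exp (-(cc • (P + Q + R)))
      = NormedSpace.exp (-(cc • R)) * NormedSpace.exp (-(cc • Q)) * NormedSpace.exp (-(cc • P)) := by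
    have e1 : -(cc • (P + Q + R)) = cc • ((-R) + (-Q) + (-P)) := by
      simp [smul_add, smul_neg]; abel
    rw [e1, exp_split3 (-R) (-Q) (-P) hQR.symm.neg_left.neg_right hPR.symm.neg_left.neg_right
      hPQ.symm.neg_left.neg_right]
    simp [smul_neg]
  rw [hsplitp, hsplitm]
  set EP := NormedSpace.exp (cc • P)
  set EQ := NormedSpace.exp (cc • Q)
  set ER := NormedSpace.exp (cc • R)
  set EP' := NormedSpace.exp (-(cc • P))
  set EQ' := NormedSpace.exp (-(cc • Q))
  set ER' := NormedSpace.exp (-(cc • R))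
  have assoc1 : ER' * EQ' * EP' * S * (EP * EQ * ER)
      = ER' * (EQ' * (EP' * S * EP) * EQ) * ER := by noncomm_ring
  rw [assoc1, exp_conj_anticomm P S hP h1]
  have e2 : EQ' * (Complex.I • (P * S)) * EQ = Complex.I • (EQ' * (P * S) * EQ) := by
    rw [mul_smul_comm, smul_mul_assoc]
  rw [e2, exp_conj_anticomm Q (P * S) hQ h2]
  have e3 : ER' * (Complex.I • (Complex.I • (Q * (P * S)))) * ER
      = (Complex.I * Complex.I) • (ER' * (Q * (P * S)) * ER) := by
    rw [smul_smul, mul_smul_comm, smul_mul_assoc]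
  rw [e3, exp_conj_of_commute (cc • R) (Q * (P * S)) (h3.smul_left cc),
    Complex.I_mul_I, neg_one_smul]

end Stmt6Aux
namespace Stmt6Aux

variable {n : ℕ} [NeZero n]

lemma eq_add_iff_off {m : ℕ} (hm : m < n) (k s : Fin n) :
    s = k + (m : Fin n) ↔ (s - k).val = m := by
  rw [← sub_eq_iff_eq_add', Fin.ext_iff, Fin.val_natCast, Nat.mod_eq_of_lt hm]

lemma eq_self_iff_off (k s : Fin n) : s = k ↔ (s - k).val = 0 := by
  rw [← sub_eq_zero, Fin.ext_iff, Fin.val_zero]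

lemma off_shift (hn : 1 < n) (k s : Fin n) :
    (s - (k - 1)).val = ((s - k).val + 1) % n := by
  have e : s - (k - 1) = (s - k) + 1 := by ring
  rw [e, Fin.val_add, Fin.val_one', Nat.mod_eq_of_lt hn]

/-- The general string site-function: `P` at offset `0`, `Q` at offset `l+1`, `PX` between. -/
def SF (k : Fin n) (l : ℕ) (P Q : M2) : Fin n → M2 := fun s =>
  if (s - k).val = 0 then P else if (s - k).val = l + 1 then Q
    else if (s - k).val ≤ l then PX else 1

/-- The `X`-block site-function. -/
def G (k : Fin n) (l : ℕ) : Fin n → M2 := fun s =>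
  if 1 ≤ (s - k).val ∧ (s - k).val ≤ l then PX else 1

lemma Xblock_eq (k : Fin n) : ∀ l : ℕ, l < n →
    (List.ofFn (fun t : Fin l => Xop (k + (((t : ℕ) + 1 : ℕ) : Fin n)))).prod = kron (G k l) := by
  intro l
  induction l with
  | zero =>
    intro _
    rw [List.ofFn_zero, List.prod_nil]
    rw [show G k 0 = fun _ => (1 : M2) from funext fun s => by
      simp only [G]; rw [if_neg (by omega)]]
    exact kron_one.symm
  | succ l ih =>
    intro hl
    rw [List.ofFn_succ', List.concat_eq_append, List.prod_append, List.prod_cons,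
      List.prod_nil, mul_one]
    simp only [Fin.coe_castSucc, Fin.val_last]
    rw [ih (by omega), Xop, kron_mul_op1]
    apply kron_congr
    intro s
    have eb : (s = k + ((l + 1 : ℕ) : Fin n)) ↔ ((s - k).val = l + 1) :=
      eq_add_iff_off (by omega) k s
    simp only [G]
    by_cases hb : s = k + ((l + 1 : ℕ) : Fin n)
    · rw [if_pos hb]
      have hv : (s - k).val = l + 1 := eb.mp hb
      rw [if_neg (by omega), if_pos (by omega), one_mul]
    · rw [if_neg hb]
      have hv : (s - k).val ≠ l + 1 := fun h => hb (eb.mpr h)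
      by_cases h1 : 1 ≤ (s - k).val ∧ (s - k).val ≤ l
      · rw [if_pos h1, if_pos (by omega)]
      · rw [if_neg h1, if_neg (by omega)]

lemma string_eq (k : Fin n) (l : ℕ) (hl : l + 1 < n) (P : M2) (PP : QOp n) (hP : PP = op1 P k)
    (Q : M2) (QQ : QOp n) (hQ : QQ = op1 Q (k + ((l + 1 : ℕ) : Fin n))) :
    PP * (List.ofFn (fun t : Fin l => Xop (k + (((t : ℕ) + 1 : ℕ) : Fin n)))).prod * QQ
      = kron (SF k l P Q) := by
  rw [hP, hQ, Xblock_eq k l (by omega), op1_mul_kron, kron_mul_op1]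
  apply kron_congr
  intro s
  have e0 : (s = k) ↔ ((s - k).val = 0) := eq_self_iff_off k s
  have eb : (s = k + ((l + 1 : ℕ) : Fin n)) ↔ ((s - k).val = l + 1) :=
    eq_add_iff_off (by omega) k s
  simp only [G, SF, e0, eb]
  split_ifs <;> first | rfl | (try omega) <;> simp <;> omega

lemma ZXXZ_eq (k : Fin n) (l : ℕ) (hl : l + 1 < n) : ZXXZ n k l = kron (SF k l PZ PZ) :=
  string_eq k l hl PZ _ rfl PZ _ rfl

lemma YXXY_eq (k : Fin n) (l : ℕ) (hl : l + 1 < n) : YXXY n k l = kron (SF k l PY PY) :=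
  string_eq k l hl PY _ rfl PY _ rfl

end Stmt6Aux
namespace Stmt6Aux

variable {n : ℕ}

lemma kron_smul_all (cS : Fin n → ℂ) (g : Fin n → M2) :
    kron (fun s => cS s • g s) = (∏ s, cS s) • kron g := by
  ext i j
  simp only [kron, Matrix.smul_apply, Matrix.smul_apply, smul_eq_mul]
  rw [← Finset.prod_mul_distrib]

lemma kron_mul_smul (f g h : Fin n → M2) (cS : Fin n → ℂ)
    (hpt : ∀ s, f s * g s = cS s • h s) (c : ℂ) (hc : ∏ s, cS s = c) :
    kron f * kron g = c • kron h := by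
  rw [kron_mul, kron_congr hpt, kron_smul_all, hc]

lemma kron_comm_sign (f g : Fin n → M2) (cS : Fin n → ℂ)
    (hpt : ∀ s, f s * g s = cS s • (g s * f s)) (c : ℂ) (hc : ∏ s, cS s = c) :
    kron f * kron g = c • (kron g * kron f) := by
  rw [kron_mul, kron_congr hpt, kron_smul_all, hc, kron_mul]

lemma kron_commute (f g : Fin n → M2) (hpt : ∀ s, f s * g s = g s * f s) :
    Commute (kron f) (kron g) := by
  have := kron_comm_sign f g (fun _ => 1) (fun s => by rw [one_smul]; exact hpt s) 1
    Finset.prod_const_one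
  rw [one_smul] at this
  exact this

lemma kron_anticommute (f g : Fin n → M2) (j : Fin n)
    (hj : f j * g j = (-1 : ℂ) • (g j * f j)) (hs : ∀ s, s ≠ j → f s * g s = g s * f s) :
    kron f * kron g = -(kron g * kron f) := by
  have h := kron_comm_sign f g (fun s => if s = j then (-1 : ℂ) else 1)
    (fun s => by
      by_cases h : s = j
      · simp only [if_pos h]; subst h; exact hj
      · simp only [if_neg h, one_smul]; exact hs s h)
    (-1) (by rw [Fintype.prod_ite_eq' j (fun _ => (-1 : ℂ))])
  rw [h, neg_one_smul]

lemma prod_if_one (j : Fin n) (c : ℂ) : (∏ s, if s = j then c else 1) = c :=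
  Fintype.prod_ite_eq' j (fun _ => c)

lemma prod_if_two (j1 j2 : Fin n) (hne : j1 ≠ j2) (c1 c2 : ℂ) :
    (∏ s : Fin n, ((if s = j1 then c1 else 1) * (if s = j2 then c2 else 1))) = c1 * c2 := by
  rw [Finset.prod_mul_distrib, prod_if_one, prod_if_one]

lemma kron_conjT (f : Fin n → M2) : (kron f)ᴴ = kron (fun l => (f l)ᴴ) := by
  ext i j
  simp only [Matrix.conjTranspose_apply, kron]
  exact star_prod _ _

end Stmt6Aux
namespace Stmt6Aux

variable {n : ℕ}

lemma op1_conjT (A : M2) (j : Fin n) : (op1 A j)ᴴ = op1 Aᴴ j := by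
  rw [op1_eq_kron, op1_eq_kron, kron_conjT]
  exact kron_congr fun l => by
    by_cases h : l = j
    · simp [h]
    · simp [h]

lemma Xop_herm (j : Fin n) : (Xop j)ᴴ = Xop j := by
  rw [Xop, op1_conjT, PXH]

lemma Zop_herm (j : Fin n) : (Zop j)ᴴ = Zop j := by
  rw [Zop, op1_conjT, PZH]

lemma Xop_sq (j : Fin n) : Xop j * Xop j = 1 := by
  rw [Xop, op1_mul_same, PX_mul_PX, op1_one]

lemma Zcomm (i j : Fin n) : Zop i * Zop j = Zop j * Zop i := by
  rw [Zop, Zop, op1_eq_kron, op1_eq_kron]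
  exact (kron_commute _ _ fun s => by split_ifs <;> simp).eq

lemma Xcomm (i j : Fin n) : Commute (Xop i) (Xop j) := by
  rw [Xop, Xop, op1_eq_kron, op1_eq_kron]
  exact kron_commute _ _ fun s => by split_ifs <;> simp

lemma mixerH_herm : (mixerH n)ᴴ = mixerH n := by
  rw [mixerH, Matrix.conjTranspose_sum]
  exact Finset.sum_congr rfl fun j _ => Xop_herm j

lemma ringH_herm [NeZero n] : (ringH n)ᴴ = ringH n := by
  rw [ringH, Matrix.conjTranspose_sum]
  refine Finset.sum_congr rfl fun j _ => ?_
  rw [Matrix.conjTranspose_mul, Zop_herm, Zop_herm, Zcomm]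

lemma star_cc : star cc = -cc := by
  simp [cc]

lemma smul_herm_conjT (H : QOp n) (h : Hᴴ = H) : (cc • H)ᴴ = -(cc • H) := by
  rw [Matrix.conjTranspose_smul, h, star_cc, neg_smul]

lemma Vop_eq [NeZero n] : Vop n
    = NormedSpace.exp (cc • mixerH n) * NormedSpace.exp (cc • ringH n) := by
  rw [Vop, qaoaLayer]
  congr 2 <;> · rw [cc]; ring_nf

lemma Vop_conjT [NeZero n] : (Vop n)ᴴ
    = NormedSpace.exp (-(cc • ringH n)) * NormedSpace.exp (-(cc • mixerH n)) := by
  rw [Vop_eq, Matrix.conjTranspose_mul, ← Matrix.exp_conjTranspose, ← Matrix.exp_conjTranspose,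
    smul_herm_conjT _ ringH_herm, smul_herm_conjT _ mixerH_herm]

end Stmt6Aux
namespace Stmt6Aux

variable {n : ℕ}

lemma PXZ_anti : PX * PZ = (-1 : ℂ) • (PZ * PX) := by
  rw [PX_mul_PZ, PZ_mul_PX, smul_smul]
  norm_num

lemma PZX_anti : PZ * PX = (-1 : ℂ) • (PX * PZ) := by
  rw [PX_mul_PZ, PZ_mul_PX, smul_smul]
  norm_num

lemma PZY_anti : PZ * PY = (-1 : ℂ) • (PY * PZ) := by
  rw [PZ_mul_PY, PY_mul_PZ, smul_smul]
  norm_num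

lemma op1_anticomm_kron (A : M2) (j : Fin n) (F : Fin n → M2)
    (h : A * F j = (-1 : ℂ) • (F j * A)) : op1 A j * kron F = -(kron F * op1 A j) := by
  rw [op1_eq_kron]
  apply kron_anticommute _ _ j
  · rw [if_pos rfl]; exact h
  · intro s hs; rw [if_neg hs, one_mul, mul_one]

lemma op1_commute_kron' (A : M2) (j : Fin n) (F : Fin n → M2) (h : A * F j = F j * A) :
    Commute (op1 A j) (kron F) := by
  rw [op1_eq_kron]
  exact kron_commute _ _ fun s => by
    by_cases hs : s = j
    · subst hs; rw [if_pos rfl]; exact h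
    · rw [if_neg hs, one_mul, mul_one]

lemma op1_mul_kron_smul (A : M2) (j : Fin n) (F G : Fin n → M2) (c : ℂ)
    (hj : A * F j = c • G j) (hs : ∀ s, s ≠ j → F s = G s) :
    op1 A j * kron F = c • kron G := by
  rw [op1_eq_kron]
  apply kron_mul_smul _ _ _ (fun s => if s = j then c else 1) ?_ c (prod_if_one j c)
  intro s
  by_cases h : s = j
  · simp only [if_pos h]; subst h; exact hj
  · simp only [if_neg h, one_mul, one_smul]; rw [hs s h]

lemma off_succ (hn : 1 < n) [NeZero n] (base s : Fin n) :
    (s + 1 - base).val = ((s - base).val + 1) % n := by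
  have e : s + 1 - base = (s - base) + 1 := by ring
  rw [e, Fin.val_add, Fin.val_one', Nat.mod_eq_of_lt hn]

end Stmt6Aux
namespace Stmt6Aux

variable {n : ℕ} [NeZero n]

lemma SF_val0 (k' : Fin n) (m : ℕ) (P Q : M2) (s : Fin n) (h : (s - k').val = 0) :
    SF k' m P Q s = P := by simp [SF, h]

lemma SF_valQ (k' : Fin n) (m : ℕ) (P Q : M2) (s : Fin n) (h : (s - k').val = m + 1) :
    SF k' m P Q s = Q := by
  simp only [SF]
  rw [if_neg (by omega), if_pos h]

lemma SF_valX (k' : Fin n) (m : ℕ) (P Q : M2) (s : Fin n) (h1 : 1 ≤ (s - k').val)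
    (h2 : (s - k').val ≤ m) : SF k' m P Q s = PX := by
  simp only [SF]
  rw [if_neg (by omega), if_neg (by omega), if_pos h2]

lemma SF_val1 (k' : Fin n) (m : ℕ) (P Q : M2) (s : Fin n) (h1 : (s - k').val ≠ 0)
    (h2 : (s - k').val ≠ m + 1) (h3 : ¬ ((s - k').val ≤ m)) : SF k' m P Q s = 1 := by
  simp only [SF]
  rw [if_neg h1, if_neg h2, if_neg h3]

lemma prod_if_two' (j1 j2 : Fin n) (f1 f2 : Fin n → ℂ) :
    (∏ s : Fin n, ((if s = j1 then f1 s else 1) * (if s = j2 then f2 s else 1)))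
      = f1 j1 * f2 j2 := by
  rw [Finset.prod_mul_distrib, Fintype.prod_ite_eq', Fintype.prod_ite_eq']

lemma kron_commute_of_sign (f g : Fin n → M2) (cS : Fin n → ℂ)
    (hpt : ∀ s, f s * g s = cS s • (g s * f s)) (hc : ∏ s, cS s = 1) :
    Commute (kron f) (kron g) := by
  have h := kron_comm_sign f g cS hpt 1 hc
  rw [one_smul] at h
  exact h

end Stmt6Aux
open Stmt6Aux in
/-- growth rule for `ZX⋯XZ` strings under conjugation by the QAOA layer `V`
at angles `β = γ = π/4`, for `0 ≤ l ≤ n - 4`, `n ≥ 5`. -/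
theorem stmt6 (n : ℕ) [NeZero n] (hn : 5 ≤ n) (k : Fin n) (l : ℕ) (hl : l ≤ n - 4) :
    (Vop n)ᴴ * ZXXZ n k l * Vop n = ZXXZ n (k - 1) (l + 2) := by
  have hn1 : (1:ℕ) < n := by omega
  have hl4 : l + 4 ≤ n := by omega
  set bb : Fin n := k + ((l + 1 : ℕ) : Fin n) with hbb
  set b1 : Fin n := k + ((l + 2 : ℕ) : Fin n) with hb1
  -- offset bookkeeping
  have off_k : (k - k).val = 0 := by rw [sub_self, Fin.val_zero]
  have off_bb : (bb - k).val = l + 1 := (eq_add_iff_off (by omega) k bb).mp hbb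
  have off_b1 : (b1 - k).val = l + 2 := (eq_add_iff_off (by omega) k b1).mp hb1
  have hkm_eq : k - 1 = k + ((n - 1 : ℕ) : Fin n) := by
    have h1 : (((n-1) + 1 : ℕ) : Fin n) = 0 := by
      rw [show (n-1)+1 = n from by omega, Fin.natCast_self]
    rw [Nat.cast_add, Nat.cast_one] at h1
    rw [eq_neg_of_add_eq_zero_left h1]
    ring
  have off_km : (k - 1 - k).val = n - 1 := (eq_add_iff_off (by omega) k (k-1)).mp hkm_eq
  have hbb2 : bb = (k - 1) + ((l + 2 : ℕ) : Fin n) := by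
    rw [hbb, show ((l + 2 : ℕ) : Fin n) = ((l + 1 : ℕ) : Fin n) + 1 from by push_cast; ring]
    ring
  have hb12 : b1 = (k - 1) + ((l + 3 : ℕ) : Fin n) := by
    rw [hb1, show ((l + 3 : ℕ) : Fin n) = ((l + 2 : ℕ) : Fin n) + 1 from by push_cast; ring]
    ring
  have uoff_bb : (bb - (k-1)).val = l + 2 := (eq_add_iff_off (by omega) (k-1) bb).mp hbb2
  have uoff_b1 : (b1 - (k-1)).val = l + 3 := (eq_add_iff_off (by omega) (k-1) b1).mp hb12
  have uoff_km : ((k-1) - (k-1)).val = 0 := by rw [sub_self, Fin.val_zero]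
  have uoff_k : (k - (k-1)).val = 1 := by
    have h : k = (k - 1) + ((1 : ℕ) : Fin n) := by push_cast; ring
    exact (eq_add_iff_off (by omega) (k-1) k).mp h
  have hvlt : ∀ s : Fin n, (s - k).val < n := fun s => (s - k).isLt
  have hoff : ∀ s : Fin n, (s - (k-1)).val = ((s - k).val + 1) % n := off_shift hn1 k
  have heqk : ∀ s : Fin n, s = k ↔ (s - k).val = 0 := fun s => eq_self_iff_off k s
  have heqbb : ∀ s : Fin n, s = bb ↔ (s - k).val = l + 1 := fun s => by
    rw [hbb]; exact eq_add_iff_off (by omega) k s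
  have heqkm : ∀ s : Fin n, s = k - 1 ↔ (s - k).val = n - 1 := fun s => by
    rw [hkm_eq]; exact eq_add_iff_off (by omega) k s
  have hueqbb : ∀ s : Fin n, s = bb ↔ (s - (k-1)).val = l + 2 := fun s => by
    rw [hbb2]; exact eq_add_iff_off (by omega) (k-1) s
  have hueqb1 : ∀ s : Fin n, s = b1 ↔ (s - (k-1)).val = l + 3 := fun s => by
    rw [hb12]; exact eq_add_iff_off (by omega) (k-1) s
  have hueqkm : ∀ s : Fin n, s = k - 1 ↔ (s - (k-1)).val = 0 := fun s => eq_self_iff_off (k-1) s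
  have hbbk : bb ≠ k := by
    intro h; rw [h, sub_self, Fin.val_zero] at off_bb; omega
  have hkkm : k ≠ k - 1 := by
    intro h; rw [← h, sub_self, Fin.val_zero] at off_km; omega
  have hbbkm : bb ≠ k - 1 := by
    intro h
    have := off_km; rw [← h, off_bb] at this; omega
  have hbbb1 : bb ≠ b1 := by
    intro h; rw [h, off_b1] at off_bb; omega
  -- ===================== mixer stage =====================
  set Rx : QOp n := ∑ j ∈ ((Finset.univ.erase k).erase bb), Xop j with hRx
  have hmix : mixerH n = Xop k + Xop bb + Rx := by
    rw [mixerH, ← Finset.add_sum_erase _ _ (Finset.mem_univ k),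
      ← Finset.add_sum_erase _ _ (Finset.mem_erase.mpr ⟨hbbk, Finset.mem_univ bb⟩),
      ← add_assoc]
  have hcXR : ∀ j : Fin n, Commute (Xop j) Rx := fun j =>
    Commute.sum_right _ _ _ (fun i _ => Xcomm j i)
  have h1 : Xop k * kron (SF k l PZ PZ) = -(kron (SF k l PZ PZ) * Xop k) := by
    rw [Xop]; apply op1_anticomm_kron
    rw [SF_val0 _ _ _ _ _ off_k]
    exact PXZ_anti
  have hPS : Xop k * kron (SF k l PZ PZ) = (-Complex.I) • kron (SF k l PY PZ) := by
    rw [Xop]; apply op1_mul_kron_smul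
    · rw [SF_val0 _ _ _ _ _ off_k, SF_val0 _ _ _ _ _ off_k]
      exact PX_mul_PZ
    · intro s hs
      have hv0 : (s - k).val ≠ 0 := fun h => hs ((heqk s).mpr h)
      simp only [SF, if_neg hv0]
  have hanti1 : Xop bb * kron (SF k l PY PZ) = -(kron (SF k l PY PZ) * Xop bb) := by
    rw [Xop]; apply op1_anticomm_kron
    rw [SF_valQ _ _ _ _ _ off_bb]
    exact PXZ_anti
  have h2 : Xop bb * (Xop k * kron (SF k l PZ PZ))
      = -((Xop k * kron (SF k l PZ PZ)) * Xop bb) := by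
    rw [hPS, mul_smul_comm, smul_mul_assoc, ← smul_neg, hanti1]
  have hQ1 : Xop bb * kron (SF k l PY PZ) = (-Complex.I) • kron (SF k l PY PY) := by
    rw [Xop]; apply op1_mul_kron_smul
    · rw [SF_valQ _ _ _ _ _ off_bb, SF_valQ _ _ _ _ _ off_bb]
      exact PX_mul_PZ
    · intro s hs
      have hvb : (s - k).val ≠ l + 1 := fun h => hs ((heqbb s).mpr h)
      by_cases h0 : (s - k).val = 0
      · simp only [SF, if_pos h0]
      · simp only [SF, if_neg h0, if_neg hvb]
  have hQPS : Xop bb * (Xop k * kron (SF k l PZ PZ))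
      = (-Complex.I) • ((-Complex.I) • kron (SF k l PY PY)) := by
    rw [hPS, mul_smul_comm, hQ1]
  have h3 : Commute Rx (Xop bb * (Xop k * kron (SF k l PZ PZ))) := by
    rw [hQPS]
    apply Commute.smul_right; apply Commute.smul_right
    apply Commute.sum_left
    intro j hj
    obtain ⟨hjbb, hjk0⟩ := Finset.mem_erase.mp hj
    obtain ⟨hjk, -⟩ := Finset.mem_erase.mp hjk0
    rw [Xop]; apply op1_commute_kron'
    have hv0 : (j - k).val ≠ 0 := fun h => hjk ((heqk j).mpr h)
    have hvb : (j - k).val ≠ l + 1 := fun h => hjbb ((heqbb j).mpr h)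
    by_cases hx : (j - k).val ≤ l
    · rw [SF_valX _ _ _ _ _ (by omega) hx]
    · rw [SF_val1 _ _ _ _ _ hv0 hvb hx, one_mul, mul_one]
  have stage1 : NormedSpace.exp (-(cc • mixerH n)) * kron (SF k l PZ PZ) *
      NormedSpace.exp (cc • mixerH n) = kron (SF k l PY PY) := by
    rw [hmix, conj_layer (Xop k) (Xop bb) Rx _ (Xcomm k bb) (hcXR k) (hcXR bb)
        (Xop_sq k) (Xop_sq bb) h1 h2 h3, hQPS, smul_smul,
      show (-Complex.I) * (-Complex.I) = (-1 : ℂ) from by rw [neg_mul_neg, Complex.I_mul_I],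
      neg_one_smul, neg_neg]
  -- ===================== cost stage =====================
  set w1f : Fin n → M2 := fun s => (if s = k - 1 then PZ else 1) * (if s = k then PZ else 1)
    with hw1f
  set w2f : Fin n → M2 := fun s => (if s = bb then PZ else 1) * (if s = b1 then PZ else 1)
    with hw2f
  have hW1 : Zop (k-1) * Zop k = kron w1f := by
    rw [Zop, Zop, op1_eq_kron, op1_eq_kron, kron_mul]
  have hW2 : Zop bb * Zop b1 = kron w2f := by
    rw [Zop, Zop, op1_eq_kron, op1_eq_kron, kron_mul]
  have hbb1 : bb + 1 = b1 := by
    rw [hbb, hb1, show ((l + 2 : ℕ) : Fin n) = ((l + 1 : ℕ) : Fin n) + 1 from by push_cast; ring,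
      add_assoc]
  set Rz : QOp n := ∑ j ∈ ((Finset.univ.erase (k-1)).erase bb), (Zop j * Zop (j+1)) with hRzd
  have hring : ringH n = kron w1f + kron w2f + Rz := by
    rw [ringH, ← Finset.add_sum_erase _ _ (Finset.mem_univ (k-1)),
      ← Finset.add_sum_erase _ _ (Finset.mem_erase.mpr ⟨hbbkm, Finset.mem_univ bb⟩),
      ← add_assoc, show k - 1 + 1 = k from by ring, hbb1, hW1, hW2]
  have hcomm_zz : ∀ (F G : Fin n → M2),
      (∀ s, F s = PZ ∨ F s = 1) → (∀ s, G s = PZ ∨ G s = 1) → Commute (kron F) (kron G) := by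
    intro F G hF hG
    apply kron_commute
    intro s
    rcases hF s with h | h <;> rcases hG s with h' | h' <;> rw [h, h'] <;> simp
  have hw1f_class : ∀ s, w1f s = PZ ∨ w1f s = 1 := by
    intro s
    simp only [hw1f]
    split_ifs with h h'
    · exact absurd (h'.symm.trans h) hkkm
    · left; rw [mul_one]
    · left; rw [one_mul]
    · right; rw [one_mul]
  have hw2f_class : ∀ s, w2f s = PZ ∨ w2f s = 1 := by
    intro s
    simp only [hw2f]
    split_ifs with h h'
    · exact absurd (h.symm.trans h') hbbb1
    · left; rw [mul_one]
    · left; rw [one_mul]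
    · right; rw [one_mul]
  have hwjf_class : ∀ (i j : Fin n) (hij : i ≠ j) (s : Fin n),
      ((if s = i then PZ else 1) * (if s = j then PZ else 1) : M2)
        = PZ ∨ ((if s = i then PZ else 1) * (if s = j then PZ else 1) : M2) = 1 := by
    intro i j hij s
    split_ifs with h h'
    · exact absurd (h.symm.trans h') hij
    · left; rw [mul_one]
    · left; rw [one_mul]
    · right; rw [one_mul]
  have hc12 : Commute (kron w1f) (kron w2f) := hcomm_zz _ _ hw1f_class hw2f_class
  have hselfne : ∀ j : Fin n, j ≠ j + 1 := by
    intro j h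
    have h0 : ((j + 1) - j).val = 1 := by
      rw [show j + 1 - j = 1 from by ring, Fin.val_one', Nat.mod_eq_of_lt hn1]
    rw [← h, sub_self, Fin.val_zero] at h0; omega
  have hc1R : Commute (kron w1f) Rz := by
    apply Commute.sum_right
    intro i _
    rw [Zop, Zop, op1_eq_kron, op1_eq_kron, kron_mul]
    exact hcomm_zz _ _ hw1f_class (hwjf_class i (i+1) (hselfne i))
  have hc2R : Commute (kron w2f) Rz := by
    apply Commute.sum_right
    intro i _
    rw [Zop, Zop, op1_eq_kron, op1_eq_kron, kron_mul]
    exact hcomm_zz _ _ hw2f_class (hwjf_class i (i+1) (hselfne i))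
  have hsq_of_class : ∀ F : Fin n → M2, (∀ s, F s = PZ ∨ F s = 1) → kron F * kron F = 1 := by
    intro F hF
    rw [kron_mul, show (fun s => F s * F s) = (fun _ : Fin n => (1 : M2)) from funext fun s => by
      rcases hF s with h | h <;> rw [h] <;> simp [PZ_mul_PZ], kron_one]
  have hW1sq : kron w1f * kron w1f = 1 := hsq_of_class _ hw1f_class
  have hW2sq : kron w2f * kron w2f = 1 := hsq_of_class _ hw2f_class
  -- w1f values
  have hw1f_k : w1f k = PZ := by
    rw [hw1f]; simp [hkkm]
  have hw1f_km : w1f (k-1) = PZ := by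
    rw [hw1f]; simp [Ne.symm hkkm]
  have hw1f_other : ∀ s, s ≠ k → s ≠ k - 1 → w1f s = 1 := by
    intro s h1 h2; rw [hw1f]; simp [h1, h2]
  have hw2f_bb : w2f bb = PZ := by
    rw [hw2f]; simp [hbbb1]
  have hw2f_b1 : w2f b1 = PZ := by
    rw [hw2f]; simp [Ne.symm hbbb1]
  have hw2f_other : ∀ s, s ≠ bb → s ≠ b1 → w2f s = 1 := by
    intro s h1 h2; rw [hw2f]; simp [h1, h2]
  -- anticommutation of W1 with the Y-string
  have h1' : kron w1f * kron (SF k l PY PY) = -(kron (SF k l PY PY) * kron w1f) := by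
    apply kron_anticommute _ _ k
    · rw [hw1f_k, SF_val0 _ _ _ _ _ off_k]
      exact PZY_anti
    · intro s hs
      by_cases hm : s = k - 1
      · rw [hm, hw1f_km, SF_val1 _ _ _ _ _ (by rw [off_km]; omega)
            (by rw [off_km]; omega) (by rw [off_km]; omega)]
        simp
      · rw [hw1f_other s hs hm, one_mul, mul_one]
  -- W1 * Y-string = (-I) • F3-string
  have hPS' : kron w1f * kron (SF k l PY PY)
      = (-Complex.I) • kron (SF (k-1) (l+1) PZ PY) := by
    apply kron_mul_smul _ _ _ (fun s => if s = k then -Complex.I else 1) ?_ _ (prod_if_one k _)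
    intro s
    by_cases hsk : s = k
    · rw [hsk, if_pos rfl, hw1f_k, SF_val0 _ _ _ _ _ off_k,
        SF_valX (k-1) (l+1) PZ PY k (by rw [uoff_k]) (by rw [uoff_k]; omega), PZ_mul_PY]
    · rw [if_neg hsk, one_smul]
      by_cases hm : s = k - 1
      · rw [hm, hw1f_km, SF_val1 _ _ _ _ _ (by rw [off_km]; omega) (by rw [off_km]; omega)
            (by rw [off_km]; omega), SF_val0 (k-1) (l+1) PZ PY _ uoff_km, mul_one]
      · rw [hw1f_other s hsk hm, one_mul]
        have hv0 : (s - k).val ≠ 0 := fun h => hsk ((heqk s).mpr h)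
        have hvkm : (s - k).val ≠ n - 1 := fun h => hm ((heqkm s).mpr h)
        have hu : (s - (k-1)).val = (s - k).val + 1 := by
          rw [hoff s, Nat.mod_eq_of_lt (by have := hvlt s; omega)]
        by_cases hq : (s - k).val = l + 1
        · rw [SF_valQ _ _ _ _ _ hq, SF_valQ (k-1) (l+1) PZ PY s (by omega)]
        · by_cases hx : (s - k).val ≤ l
          · rw [SF_valX _ _ _ _ _ (by omega) hx,
              SF_valX (k-1) (l+1) PZ PY s (by omega) (by omega)]
          · rw [SF_val1 _ _ _ _ _ hv0 hq hx,
              SF_val1 (k-1) (l+1) PZ PY s (by omega) (by omega) (by omega)]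
  have hanti2 : kron w2f * kron (SF (k-1) (l+1) PZ PY)
      = -(kron (SF (k-1) (l+1) PZ PY) * kron w2f) := by
    apply kron_anticommute _ _ bb
    · rw [hw2f_bb, SF_valQ (k-1) (l+1) PZ PY bb (by rw [uoff_bb])]
      exact PZY_anti
    · intro s hs
      by_cases hm : s = b1
      · rw [hm, hw2f_b1, SF_val1 (k-1) (l+1) PZ PY _ (by rw [uoff_b1]; omega)
            (by rw [uoff_b1]; omega) (by rw [uoff_b1]; omega)]
        simp
      · rw [hw2f_other s hs hm, one_mul, mul_one]
  have h2' : kron w2f * (kron w1f * kron (SF k l PY PY))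
      = -((kron w1f * kron (SF k l PY PY)) * kron w2f) := by
    rw [hPS', mul_smul_comm, smul_mul_assoc, ← smul_neg, hanti2]
  have hQ2 : kron w2f * kron (SF (k-1) (l+1) PZ PY)
      = (-Complex.I) • kron (SF (k-1) (l+2) PZ PZ) := by
    apply kron_mul_smul _ _ _ (fun s => if s = bb then -Complex.I else 1) ?_ _ (prod_if_one bb _)
    intro s
    by_cases hsb : s = bb
    · rw [hsb, if_pos rfl, hw2f_bb, SF_valQ (k-1) (l+1) PZ PY _ (by rw [uoff_bb]),
        SF_valX (k-1) (l+2) PZ PZ _ (by rw [uoff_bb]; omega) (by rw [uoff_bb]), PZ_mul_PY]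
    · rw [if_neg hsb, one_smul]
      by_cases hm : s = b1
      · rw [hm, hw2f_b1, SF_val1 (k-1) (l+1) PZ PY _ (by rw [uoff_b1]; omega)
            (by rw [uoff_b1]; omega) (by rw [uoff_b1]; omega),
          SF_valQ (k-1) (l+2) PZ PZ _ (by rw [uoff_b1]), mul_one]
      · rw [hw2f_other s hsb hm, one_mul]
        have hub : (s - (k-1)).val ≠ l + 2 := fun h => hsb ((hueqbb s).mpr h)
        have hub1 : (s - (k-1)).val ≠ l + 3 := fun h => hm ((hueqb1 s).mpr h)
        by_cases h0 : (s - (k-1)).val = 0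
        · rw [SF_val0 _ _ _ _ _ h0, SF_val0 _ _ _ _ _ h0]
        · by_cases hx : (s - (k-1)).val ≤ l + 1
          · rw [SF_valX _ _ _ _ _ (by omega) hx, SF_valX _ _ _ _ _ (by omega) (by omega)]
          · rw [SF_val1 _ _ _ _ _ h0 (by omega) hx, SF_val1 _ _ _ _ _ h0 hub1 (by omega)]
  have hQPS' : kron w2f * (kron w1f * kron (SF k l PY PY))
      = (-Complex.I) • ((-Complex.I) • kron (SF (k-1) (l+2) PZ PZ)) := by
    rw [hPS', mul_smul_comm, hQ2]
  -- F4 classification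
  have hF4X : ∀ s : Fin n, 1 ≤ (s - (k-1)).val → (s - (k-1)).val ≤ l + 2 →
      SF (k-1) (l+2) PZ PZ s = PX := fun s h1 h2 => SF_valX _ _ _ _ _ h1 h2
  have hF4Z : ∀ s : Fin n, ¬(1 ≤ (s - (k-1)).val ∧ (s - (k-1)).val ≤ l + 2) →
      SF (k-1) (l+2) PZ PZ s = PZ ∨ SF (k-1) (l+2) PZ PZ s = 1 := by
    intro s hcnd
    by_cases h0 : (s - (k-1)).val = 0
    · left; exact SF_val0 _ _ _ _ _ h0
    · by_cases h3 : (s - (k-1)).val = l + 3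
      · left; exact SF_valQ _ _ _ _ _ h3
      · right; exact SF_val1 _ _ _ _ _ h0 h3 (by omega)
  have h3' : Commute Rz (kron w2f * (kron w1f * kron (SF k l PY PY))) := by
    rw [hQPS']
    apply Commute.smul_right; apply Commute.smul_right
    apply Commute.sum_left
    intro j hj
    obtain ⟨hjbb, hjkm0⟩ := Finset.mem_erase.mp hj
    obtain ⟨hjkm, -⟩ := Finset.mem_erase.mp hjkm0
    rw [Zop, Zop, op1_eq_kron, op1_eq_kron, kron_mul]
    have hu0 : (j - (k-1)).val ≠ 0 := fun h => hjkm ((hueqkm j).mpr h)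
    have hub : (j - (k-1)).val ≠ l + 2 := fun h => hjbb ((hueqbb j).mpr h)
    have huj1 : ((j+1) - (k-1)).val = ((j - (k-1)).val + 1) % n := off_succ hn1 (k-1) j
    have hujlt : (j - (k-1)).val < n := (j - (k-1)).isLt
    have key : ∀ s : Fin n, PZ * SF (k-1) (l+2) PZ PZ s =
        (if 1 ≤ (s - (k-1)).val ∧ (s - (k-1)).val ≤ l + 2 then (-1:ℂ) else 1)
          • (SF (k-1) (l+2) PZ PZ s * PZ) := by
      intro s
      by_cases hcnd : 1 ≤ (s - (k-1)).val ∧ (s - (k-1)).val ≤ l + 2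
      · rw [if_pos hcnd, hF4X s hcnd.1 hcnd.2]
        exact PZX_anti
      · rw [if_neg hcnd, one_smul]
        rcases hF4Z s hcnd with h4 | h4 <;> rw [h4]
        simp
    apply kron_commute_of_sign _ _ (fun s =>
      (if s = j then (if 1 ≤ (s - (k-1)).val ∧ (s - (k-1)).val ≤ l + 2 then (-1:ℂ) else 1) else 1)
        * (if s = j+1 then (if 1 ≤ (s - (k-1)).val ∧ (s - (k-1)).val ≤ l + 2 then (-1:ℂ) else 1) else 1))
    · intro s
      by_cases hsj : s = j
      · have hsj1 : s ≠ j + 1 := by rw [hsj]; exact hselfne j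
        simp only [if_pos hsj, if_neg hsj1, mul_one]
        exact key s
      · by_cases hsj1 : s = j + 1
        · simp only [if_neg hsj, if_pos hsj1, one_mul]
          exact key s
        · simp only [if_neg hsj, if_neg hsj1, one_mul, mul_one, one_smul]
    · rw [prod_if_two']
      by_cases hA : 1 ≤ (j - (k-1)).val ∧ (j - (k-1)).val ≤ l + 2
      · have hA1 : ((j+1) - (k-1)).val = (j - (k-1)).val + 1 := by
          rw [huj1, Nat.mod_eq_of_lt (by omega)]
        rw [if_pos hA, if_pos (show 1 ≤ ((j+1) - (k-1)).val ∧ ((j+1) - (k-1)).val ≤ l + 2 from by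
          rw [hA1]; omega)]
        norm_num
      · have hB : ¬(1 ≤ ((j+1) - (k-1)).val ∧ ((j+1) - (k-1)).val ≤ l + 2) := by
          rcases Nat.lt_or_ge ((j - (k-1)).val + 1) n with hlt | hge
          · rw [huj1, Nat.mod_eq_of_lt hlt]; omega
          · have he : (j - (k-1)).val = n - 1 := by omega
            rw [huj1, he, show n - 1 + 1 = n from by omega, Nat.mod_self]; omega
        rw [if_neg hA, if_neg hB]
        norm_num
  have stage2 : NormedSpace.exp (-(cc • ringH n)) * kron (SF k l PY PY) *
      NormedSpace.exp (cc • ringH n) = kron (SF (k-1) (l+2) PZ PZ) := by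
    rw [hring, conj_layer (kron w1f) (kron w2f) Rz _ hc12 hc1R hc2R hW1sq hW2sq h1' h2' h3',
      hQPS', smul_smul,
      show (-Complex.I) * (-Complex.I) = (-1 : ℂ) from by rw [neg_mul_neg, Complex.I_mul_I],
      neg_one_smul, neg_neg]
  -- ===================== assembly =====================
  have hS0 : ZXXZ n k l = kron (SF k l PZ PZ) := ZXXZ_eq k l (by omega)
  calc (Vop n)ᴴ * ZXXZ n k l * Vop n
      = NormedSpace.exp (-(cc • ringH n)) *
          (NormedSpace.exp (-(cc • mixerH n)) * kron (SF k l PZ PZ) *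
            NormedSpace.exp (cc • mixerH n)) * NormedSpace.exp (cc • ringH n) := by
        rw [Vop_conjT, Vop_eq, hS0]; noncomm_ring
    _ = NormedSpace.exp (-(cc • ringH n)) * kron (SF k l PY PY) *
          NormedSpace.exp (cc • ringH n) := by rw [stage1]
    _ = kron (SF (k-1) (l+2) PZ PZ) := stage2
    _ = ZXXZ n (k - 1) (l + 2) := (ZXXZ_eq (k-1) (l+2) (by omega)).symm
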